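/- For a closed surreal substructure S, the class S^{⧸ω} of S-fixed points equals the intersection over n ∈ ℕ of the n-fold imbrications S^{⧸n} = Ξ_S^n(No). -/

import Mathlib

open Ordinal

attribute [local instance] Classical.propDecidable

/-- A surreal number presented as a sign sequence: a map from an ordinal (its
length) to `{-1, +1}`, extended by `0` beyond its length. -/
structure SSurreal : Type 1 where
  length : Ordinal.{0}
  sign : Ordinal → ℤ
  sign_mem : ∀ α, α < length → sign α = 1 ∨ sign α = -1
  sign_zero : ∀ α, ¬ α < length → sign α = 0

namespace SSurreal

/-- Simplicity: `x ⊑ y`, i.e. `x` is an initial segment of `y`. -/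
def sle (x y : SSurreal) : Prop := ∀ α, α < x.length → x.sign α = y.sign α

/-- Strict simplicity `x ⊏ y`. -/
def slt (x y : SSurreal) : Prop := sle x y ∧ x ≠ y

/-- The (lexicographic, Conway) order on sign sequences. -/
def lt (x y : SSurreal) : Prop :=
  ∃ α, (∀ β, β < α → x.sign β = y.sign β) ∧ x.sign α < y.sign α

/-- The empty sign sequence, i.e. the surreal number `0`. -/
noncomputable def zero : SSurreal :=
  ⟨0, fun _ => 0, fun α h => absurd h (not_lt_of_ge (zero_le : (0 : Ordinal) ≤ α)), fun _ _ => rfl⟩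

/-- The ordinal `o` viewed as the constant `+1` sign sequence of length `o`. -/
noncomputable def ofOrdinal (o : Ordinal) : SSurreal :=
  ⟨o, fun α => if α < o then 1 else 0, fun α h => Or.inl (if_pos h), fun α h => if_neg h⟩

/-- The surreal number `1`. -/
noncomputable def one : SSurreal := ofOrdinal 1

/-- The surreal number `-1`. -/
noncomputable def negOne : SSurreal :=
  ⟨1, fun α => if α < 1 then -1 else 0, fun α h => Or.inr (if_pos h), fun α h => if_neg h⟩

/-- Negation: flip every sign. -/
noncomputable def neg (x : SSurreal) : SSurreal :=
  ⟨x.length, fun α => - x.sign α,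
    fun α h => by rcases x.sign_mem α h with h' | h' <;> simp [h'],
    fun α h => by simp [x.sign_zero α h]⟩

/-- Concatenation `x ∔ y` of sign sequences. -/
noncomputable def concat (x y : SSurreal) : SSurreal where
  length := x.length + y.length
  sign α := if α < x.length then x.sign α else y.sign (α - x.length)
  sign_mem := by
    intro α h
    by_cases hx : α < x.length
    · rw [if_pos hx]; exact x.sign_mem α hx
    · rw [if_neg hx]
      refine y.sign_mem _ ?_
      have hle : x.length ≤ α := not_lt.mp hx
      have := Ordinal.sub_lt_of_le hle (c := y.length)
      exact this.mpr h
  sign_zero := by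
    intro α h
    have hx : ¬ α < x.length := fun hx =>
      h (hx.trans_le (le_self_add))
    rw [if_neg hx]
    refine y.sign_zero _ ?_
    intro hy
    exact h ((Ordinal.sub_lt_of_le (not_lt.mp hx)).mp hy)

/-- The concatenation product `x ⨰ y` of sign sequences. -/
noncomputable def mul (x y : SSurreal) : SSurreal where
  length := x.length * y.length
  sign γ := if γ < x.length * y.length then y.sign (γ / x.length) * x.sign (γ % x.length) else 0
  sign_mem := by
    intro γ h
    rw [if_pos h]
    have hx0 : x.length ≠ 0 := by
      intro h0; rw [h0, zero_mul] at h; exact (not_lt_of_ge (zero_le : (0 : Ordinal) ≤ γ)) h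
    have h1 : γ / x.length < y.length := by
      rwa [Ordinal.div_lt hx0]
    have h2 : γ % x.length < x.length := Ordinal.mod_lt γ hx0
    rcases y.sign_mem _ h1 with hy | hy <;> rcases x.sign_mem _ h2 with hx | hx <;>
      simp [hy, hx]
  sign_zero := fun γ h => if_neg h

/-- `s` is the supremum of `C` with respect to simplicity. -/
def IsSimpSup (C : Set SSurreal) (s : SSurreal) : Prop :=
  (∀ x ∈ C, sle x s) ∧ ∀ t, (∀ x ∈ C, sle x t) → sle s t

/-- The supremum of a ⊏-chain of sign sequences (their union), when it
exists; junk value `zero` otherwise. -/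
noncomputable def chainSup (C : Set SSurreal) : SSurreal :=
  if h : ∃ s, IsSimpSup C s then h.choose else zero

/-- Transfinite concatenation `[α, f] = ∔_{γ<α} f(γ)`. -/
noncomputable def concatSum (α : Ordinal) (f : Ordinal → SSurreal) : SSurreal :=
  Ordinal.limitRecOn α zero (fun β ih => concat ih (f β))
    (fun γ _ ih => chainSup (Set.range fun p : Set.Iio γ => ih p.1 p.2))

/-- Restriction of `z` to an initial segment of length (at most) `β`. -/
noncomputable def trunc (z : SSurreal) (β : Ordinal) : SSurreal where
  length := min β z.length
  sign α := if α < min β z.length then z.sign α else 0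
  sign_mem := fun α h => by
    rw [if_pos h]; exact z.sign_mem α (h.trans_le (min_le_right _ _))
  sign_zero := fun α h => if_neg h

/-- The number of `+1` signs occurring in `s` strictly below `γ`. -/
noncomputable def countPlus (s : Ordinal → ℤ) (γ : Ordinal) : Ordinal :=
  Ordinal.limitRecOn γ 0 (fun β ih => if s β = 1 then ih + 1 else ih)
    (fun γ' _ ih => ⨆ β : Set.Iio γ', ih β.1 β.2)

/-- `τ_u`: the ordinal number of `+1` signs in the sign sequence of `u`. -/
noncomputable def tau (u : SSurreal) : Ordinal := countPlus u.sign u.length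

end SSurreal

namespace SSurreal

/-- `Ξ` is the parametrisation of the surreal substructure `S`: a
`(<, ⊏)`-isomorphism from `No` onto `S`. -/
def IsSubstructurePar (S : Set SSurreal) (Ξ : SSurreal → SSurreal) : Prop :=
  (∀ z, Ξ z ∈ S) ∧ (∀ y ∈ S, ∃ z, Ξ z = y) ∧
  (∀ z w, lt z w ↔ lt (Ξ z) (Ξ w)) ∧ (∀ z w, slt z w ↔ slt (Ξ z) (Ξ w))

/-- The parametrisation `Ξ` is closed: it commutes with simplicity-suprema of
nonempty ⊏-chains. -/
def IsClosedPar (Ξ : SSurreal → SSurreal) : Prop :=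
  ∀ C : Set SSurreal, C.Nonempty → IsChain slt C →
    ∀ s, IsSimpSup C s → IsSimpSup (Ξ '' C) (Ξ s)

-- auxiliary lemmas
private lemma sign_neg_one_le (x : SSurreal) (α : Ordinal) : -1 ≤ x.sign α := by
  by_cases h : α < x.length
  · rcases x.sign_mem α h with h' | h' <;> simp [h']
  · simp [x.sign_zero α h]

private lemma sign_le_one (x : SSurreal) (α : Ordinal) : x.sign α ≤ 1 := by
  by_cases h : α < x.length
  · rcases x.sign_mem α h with h' | h' <;> simp [h']
  · simp [x.sign_zero α h]

private lemma sign_ne_zero (x : SSurreal) {α : Ordinal} (h : α < x.length) : x.sign α ≠ 0 := by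
  rcases x.sign_mem α h with h' | h' <;> simp [h']

private lemma length_le_of_sign_eq {x y : SSurreal} (h : ∀ α, x.sign α = y.sign α) :
    x.length ≤ y.length := by
  by_contra hc
  push_neg at hc
  have h1 : x.sign y.length ≠ 0 := x.sign_ne_zero hc
  rw [h] at h1
  exact h1 (y.sign_zero _ (lt_irrefl _))

private lemma myext {x y : SSurreal} (h : ∀ α, x.sign α = y.sign α) : x = y := by
  have hl : x.length = y.length :=
    le_antisymm (length_le_of_sign_eq h) (length_le_of_sign_eq fun α => (h α).symm)
  cases x; cases y
  simp only [mk.injEq]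
  exact ⟨hl, funext h⟩

private lemma lt_irrefl' (x : SSurreal) : ¬ lt x x := by
  rintro ⟨α, -, h⟩
  exact lt_irrefl _ h

private lemma exists_sign_ne {x y : SSurreal} (h : x ≠ y) : ∃ α, x.sign α ≠ y.sign α := by
  by_contra hc
  push_neg at hc
  exact h (myext hc)

private lemma lt_total_of_ne {x y : SSurreal} (h : x ≠ y) : lt x y ∨ lt y x := by
  obtain ⟨α₀, hα₀⟩ := exists_sign_ne h
  set β := sInf {α | x.sign α ≠ y.sign α} with hβdef
  have hβ : β ∈ {α | x.sign α ≠ y.sign α} := csInf_mem ⟨α₀, hα₀⟩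
  have hag : ∀ α, α < β → x.sign α = y.sign α := by
    intro α hα
    by_contra hc
    exact absurd (csInf_le' (s := {α | x.sign α ≠ y.sign α}) hc) (not_le.mpr hα)
  rcases lt_or_gt_of_ne hβ with h' | h'
  · exact Or.inl ⟨β, hag, h'⟩
  · exact Or.inr ⟨β, fun α hα => (hag α hα).symm, h'⟩

private lemma lt_branch {x y : SSurreal} {β : Ordinal}
    (hag : ∀ α, α < β → x.sign α = y.sign α) (hd : x.sign β ≠ y.sign β)
    (h : lt x y) : x.sign β < y.sign β := by
  obtain ⟨α, hag', hlt⟩ := h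
  rcases lt_trichotomy α β with h1 | h1 | h1
  · exact absurd (hag α h1) (ne_of_lt hlt)
  · rwa [h1] at hlt
  · exact absurd (hag' β h1) hd

private lemma trunc_sle (x : SSurreal) (β : Ordinal) : sle (trunc x β) x := by
  intro α hα
  exact if_pos hα

private lemma slt_length {x y : SSurreal} (h : slt x y) : x.length < y.length := by
  obtain ⟨hle, hne⟩ := h
  have hxy : x.length ≤ y.length := by
    by_contra hc
    push_neg at hc
    have h1 := x.sign_ne_zero hc
    rw [hle _ hc] at h1
    exact h1 (y.sign_zero _ (lt_irrefl _))
  rcases lt_or_eq_of_le hxy with h' | h'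
  · exact h'
  · exfalso
    apply hne
    apply myext
    intro α
    by_cases hα : α < x.length
    · exact hle α hα
    · rw [x.sign_zero α hα, y.sign_zero α (h' ▸ hα)]

private lemma branch_le_length {x y : SSurreal} {β : Ordinal}
    (hag : ∀ α, α < β → x.sign α = y.sign α) (hd : x.sign β ≠ y.sign β) :
    β ≤ x.length ∧ β ≤ y.length := by
  have key : ∀ u v : SSurreal, (∀ α, α < β → u.sign α = v.sign α) → u.sign β ≠ v.sign β →
      β ≤ u.length := by
    intro u v hag hd
    by_contra hc
    push_neg at hc
    have h1 : v.sign u.length = 0 := by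
      rw [← hag _ hc]
      exact u.sign_zero _ (lt_irrefl _)
    have h2 : v.length ≤ u.length := by
      by_contra h3
      push_neg at h3
      exact v.sign_ne_zero h3 h1
    apply hd
    rw [u.sign_zero β (by exact fun h => absurd (h.trans hc) (lt_irrefl _)),
        v.sign_zero β (by exact fun h => absurd (h.trans_le (h2.trans hc.le)) (lt_irrefl _))]
  exact ⟨key x y hag hd, key y x (fun α h => (hag α h).symm) (Ne.symm hd)⟩

private lemma length_le_xi (Ξ : SSurreal → SSurreal)
    (hΞ : ∀ z w, slt z w → slt (Ξ z) (Ξ w)) (c : SSurreal) :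
    c.length ≤ (Ξ c).length := by
  suffices H : ∀ γ (c : SSurreal), c.length = γ → c.length ≤ (Ξ c).length from H _ c rfl
  intro γ
  induction γ using Ordinal.induction with
  | h γ IH =>
    intro c hcγ
    by_contra hc
    push_neg at hc
    set δ := (Ξ c).length with hδ
    have hδγ : δ < γ := hcγ ▸ hc
    have htl : (trunc c δ).length = δ := min_eq_left hc.le
    have hd : slt (trunc c δ) c := by
      refine ⟨trunc_sle c δ, fun he => ?_⟩
      rw [← he, htl] at hc
      exact lt_irrefl _ hc
    have h2 := slt_length (hΞ _ _ hd)
    have h3 := IH δ hδγ (trunc c δ) htl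
    rw [htl] at h3
    exact absurd (h3.trans_lt h2) (lt_irrefl _)

end SSurreal

open SSurreal in
private lemma xi_injective {S : Set SSurreal} {Ξ : SSurreal → SSurreal}
    (hS : IsSubstructurePar S Ξ) : Function.Injective Ξ := by
  intro x y hxy
  by_contra hne
  rcases lt_total_of_ne hne with h' | h'
  · have := (hS.2.2.1 x y).mp h'
    rw [hxy] at this
    exact lt_irrefl' _ this
  · have := (hS.2.2.1 y x).mp h'
    rw [hxy] at this
    exact lt_irrefl' _ this

open SSurreal in
/-- for a closed surreal substructure `S`, the class of
`S`-fixed points equals the intersection of the `n`-fold imbrications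
`S^{⧸n} = Ξ_S^n(No)`. -/
theorem fixed_points_eq_iInter_iterates (S : Set SSurreal)
    (Ξ : SSurreal → SSurreal) (hS : IsSubstructurePar S Ξ)
    (hcl : IsClosedPar Ξ) :
    {z : SSurreal | Ξ z = z} = ⋂ n : ℕ, Set.range (Ξ^[n]) := by
  ext z
  simp only [Set.mem_setOf_eq, Set.mem_iInter, Set.mem_range]
  constructor
  · intro h n
    exact ⟨z, Function.iterate_fixed h n⟩
  · intro hz
    have hinj : Function.Injective Ξ := xi_injective hS
    have hltiso := hS.2.2.1
    have hsltΞ : ∀ u w, slt u w → slt (Ξ u) (Ξ w) := fun u w h => (hS.2.2.2 u w).mp h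
    have hsleΞ : ∀ c x, sle c x → sle (Ξ c) (Ξ x) := by
      intro c x h
      by_cases hcx : c = x
      · subst hcx; exact fun α _ => rfl
      · exact (hsltΞ c x ⟨h, hcx⟩).1
    choose a ha using hz
    have ha0 : a 0 = z := ha 0
    have hstep : ∀ n, Ξ (a (n+1)) = a n := by
      intro n
      apply hinj.iterate n
      rw [← Function.iterate_succ_apply, ha, ha]
    by_contra hfix
    have hne : ∀ n, a (n+1) ≠ a n := by
      intro n h
      apply hfix
      have h1 := ha (n+1)
      rw [h, Function.iterate_succ_apply', ha n] at h1
      exact h1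
    -- branch ordinals
    set D : ℕ → Set Ordinal.{0} := fun n => {α | (a n).sign α ≠ (a (n+1)).sign α} with hD
    have hDne : ∀ n, (D n).Nonempty := fun n => exists_sign_ne (Ne.symm (hne n))
    set β : ℕ → Ordinal.{0} := fun n => sInf (D n) with hβ
    have hβmem : ∀ n, (a n).sign (β n) ≠ (a (n+1)).sign (β n) := by
      intro n
      exact csInf_mem (hDne n)
    have hβag : ∀ n, ∀ α, α < β n → (a n).sign α = (a (n+1)).sign α := by
      intro n α hα
      by_contra hc
      exact absurd (csInf_le' (s := D n) hc) (not_le.mpr hα)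
    have hβlen : ∀ n, β n ≤ (a n).length ∧ β n ≤ (a (n+1)).length :=
      fun n => branch_le_length (hβag n) (hβmem n)
    -- key construction: common prefix and its image
    have hkey : ∀ n, (trunc (a (n+1)) (β (n+1))).length = β (n+1) ∧
        sle (Ξ (trunc (a (n+1)) (β (n+1)))) (a n) ∧
        sle (Ξ (trunc (a (n+1)) (β (n+1)))) (a (n+1)) ∧
        (Ξ (trunc (a (n+1)) (β (n+1)))).length ≤ β n ∧
        β (n+1) ≤ (Ξ (trunc (a (n+1)) (β (n+1)))).length := by
      intro n
      set c := trunc (a (n+1)) (β (n+1)) with hcdef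
      have hcl : c.length = β (n+1) := min_eq_left (hβlen (n+1)).1
      have hc1 : sle c (a (n+1)) := trunc_sle _ _
      have hc2 : sle c (a (n+2)) := by
        intro α hα
        exact (hc1 α hα).trans (hβag (n+1) α (by rw [← hcl]; exact hα))
      have hΞ1 : sle (Ξ c) (a n) := by
        have := hsleΞ c (a (n+1)) hc1
        rwa [hstep n] at this
      have hΞ2 : sle (Ξ c) (a (n+1)) := by
        have := hsleΞ c (a (n+2)) hc2
        rwa [hstep (n+1)] at this
      have hlen1 : (Ξ c).length ≤ β n := by
        by_contra hx
        push_neg at hx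
        exact hβmem n (((hΞ1 _ hx).symm).trans (hΞ2 _ hx))
      have hlen2 : β (n+1) ≤ (Ξ c).length := by
        rw [← hcl]; exact length_le_xi Ξ hsltΞ c
      exact ⟨hcl, hΞ1, hΞ2, hlen1, hlen2⟩
    have hA : ∀ n, β (n+1) ≤ β n := fun n => (hkey n).2.2.2.2.trans (hkey n).2.2.2.1
    -- the branch ordinals stabilize
    obtain ⟨N, hN⟩ : ∃ N, sInf (Set.range β) = β N := by
      obtain ⟨N, hN⟩ := csInf_mem (s := Set.range β) ⟨β 0, 0, rfl⟩
      exact ⟨N, hN.symm⟩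
    have hmin : ∀ m, β N ≤ β m := fun m => hN ▸ csInf_le' ⟨m, rfl⟩
    have hanti : ∀ m n, m ≤ n → β n ≤ β m := by
      intro m n h
      induction h with
      | refl => exact le_refl _
      | step h ih => exact (hA _).trans ih
    have hβN1 : β (N+1) = β N := le_antisymm (hanti N (N+1) (Nat.le_succ N)) (hmin (N+1))
    -- Ξ fixes the stable common prefix; hence β N < (a (N+1)).length
    have hC : β N < (a (N+1)).length := by
      rcases lt_or_eq_of_le (hβlen N).2 with h | h
      · exact h
      · exfalso
        obtain ⟨hcl, hΞ1, hΞ2, hlen1, hlen2⟩ := hkey N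
        generalize hcdef : trunc (a (N+1)) (β (N+1)) = c at hcl hΞ1 hΞ2 hlen1 hlen2
        have hc1 : sle c (a (N+1)) := hcdef ▸ trunc_sle (a (N+1)) (β (N+1))
        have hclN : c.length = β N := by rw [hcl, hβN1]
        have hlen : (Ξ c).length = β N := le_antisymm hlen1 (by rw [← hβN1]; exact hlen2)
        have hceq : Ξ c = c := by
          apply myext
          intro α
          by_cases hα : α < β N
          · exact (hΞ2 α (by rw [hlen]; exact hα)).trans ((hc1 α (by rw [hclN]; exact hα)).symm)
          · rw [(Ξ c).sign_zero α (by rw [hlen]; exact hα), c.sign_zero α (by rw [hclN]; exact hα)]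
        have hca : c = a (N+1) := by
          apply myext
          intro α
          by_cases hα : α < β N
          · exact hc1 α (by rw [hclN]; exact hα)
          · rw [c.sign_zero α (by rw [hclN]; exact hα),
              (a (N+1)).sign_zero α (by rw [← h]; exact hα)]
        apply hne N
        have h2 : a N = a (N+1) := by rw [← hstep N, ← hca, hceq]
        exact h2.symm
    -- final contradiction via order preservation
    have hst : (a N).sign (β N) ≠ (a (N+1)).sign (β N) := hβmem N
    have htr : (a (N+1)).sign (β N) ≠ (a (N+2)).sign (β N) := by
      have := hβmem (N+1)
      rwa [hβN1] at this
    have hag0 : ∀ α, α < β N → (a N).sign α = (a (N+1)).sign α := hβag N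
    have hag1 : ∀ α, α < β N → (a (N+1)).sign α = (a (N+2)).sign α := by
      intro α hα
      exact hβag (N+1) α (by rw [hβN1]; exact hα)
    have hiso1 : lt (a (N+1)) (a (N+2)) ↔ lt (a N) (a (N+1)) := by
      have := hltiso (a (N+1)) (a (N+2))
      rwa [hstep N, hstep (N+1)] at this
    have hiso2 : lt (a (N+2)) (a (N+1)) ↔ lt (a (N+1)) (a N) := by
      have := hltiso (a (N+2)) (a (N+1))
      rwa [hstep N, hstep (N+1)] at this
    have ht1 : (a (N+1)).sign (β N) = 1 ∨ (a (N+1)).sign (β N) = -1 :=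
      (a (N+1)).sign_mem _ hC
    rcases lt_or_gt_of_ne htr with h' | h'
    · have h1 : lt (a (N+1)) (a (N+2)) := ⟨β N, hag1, h'⟩
      have h3 : (a N).sign (β N) < (a (N+1)).sign (β N) :=
        lt_branch hag0 hst (hiso1.mp h1)
      rcases ht1 with ht | ht
      · rw [ht] at h'
        exact absurd h' (not_lt.mpr (sign_le_one _ _))
      · rw [ht] at h3
        exact absurd h3 (not_lt.mpr (sign_neg_one_le _ _))
    · have h1 : lt (a (N+2)) (a (N+1)) := ⟨β N, fun α hα => (hag1 α hα).symm, h'⟩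
      have h3 : (a (N+1)).sign (β N) < (a N).sign (β N) :=
        lt_branch (fun α hα => (hag0 α hα).symm) (Ne.symm hst) (hiso2.mp h1)
      rcases ht1 with ht | ht
      · rw [ht] at h3
        exact absurd h3 (not_lt.mpr (sign_le_one _ _))
      · rw [ht] at h'
        exact absurd h' (not_lt.mpr (sign_neg_one_le _ _))
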